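/- Let α be a primitive p-th root of unity and F(x,y) = (αx + f(y), y/α) a C¹ map on 𝕂² with f(0) = f'(0) = 0. Then F is periodic if and only if ∑_{j=0}^{p-1} α^j f(α^j y) ≡ 0 for all y, and in that case F is exactly p-periodic. -/
import Mathlib


/-- Let `α` be a primitive `p`-th root of unity and
`F(x,y) = (αx + f(y), y/α)` a `C¹` map with `f(0) = f'(0) = 0`. Then `F` is
periodic iff `∑_{j<p} αʲ f(αʲ y) ≡ 0`, and in that case `F` is exactly
`p`-periodic. -/
theorem stmt_6 {𝕂 : Type} [RCLike 𝕂] (α : 𝕂) (p : ℕ) (hp : 0 < p)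
    (hα : α ^ p = 1) (hprim : ∀ q : ℕ, 0 < q → q < p → α ^ q ≠ 1)
    (f : 𝕂 → 𝕂) (hf : ContDiff 𝕂 1 f) (hf0 : f 0 = 0) (hf1 : deriv f 0 = 0) :
    ((∃ q : ℕ, 0 < q ∧
        ∀ z : 𝕂 × 𝕂, (fun w : 𝕂 × 𝕂 => (α * w.1 + f w.2, w.2 / α))^[q] z = z) ↔
      ∀ y : 𝕂, ∑ j ∈ Finset.range p, α ^ j * f (α ^ j * y) = 0) ∧
    ((∀ y : 𝕂, ∑ j ∈ Finset.range p, α ^ j * f (α ^ j * y) = 0) →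
      (∀ z : 𝕂 × 𝕂, (fun w : 𝕂 × 𝕂 => (α * w.1 + f w.2, w.2 / α))^[p] z = z) ∧
      ∀ q : ℕ, 0 < q →
        (∀ z : 𝕂 × 𝕂, (fun w : 𝕂 × 𝕂 => (α * w.1 + f w.2, w.2 / α))^[q] z = z) →
        p ≤ q) := by
  have hα0 : α ≠ 0 := by
    intro h
    rw [h, zero_pow hp.ne'] at hα
    exact one_ne_zero hα.symm
  set F : 𝕂 × 𝕂 → 𝕂 × 𝕂 := fun w => (α * w.1 + f w.2, w.2 / α) with hF
  set S : 𝕂 → 𝕂 := fun y => ∑ j ∈ Finset.range p, α ^ j * f (α ^ j * y) with hS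
  -- general iterate formula
  have key : ∀ n (x y : 𝕂), F^[n] (x, y) =
      (α ^ n * x + ∑ j ∈ Finset.range n, α ^ (n - 1 - j) * f (y / α ^ j), y / α ^ n) := by
    intro n
    induction n with
    | zero => simp
    | succ n ih =>
      intro x y
      rw [Function.iterate_succ_apply', ih, hF]
      refine Prod.ext ?_ ?_
      · simp only [Finset.sum_range_succ]
        rw [mul_add, Finset.mul_sum]
        have h1 : ∀ j ∈ Finset.range n,
            α * (α ^ (n - 1 - j) * f (y / α ^ j)) = α ^ (n + 1 - 1 - j) * f (y / α ^ j) := by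
          intro j hj
          rw [Finset.mem_range] at hj
          rw [← mul_assoc, ← pow_succ']
          congr 2
          omega
        rw [Finset.sum_congr rfl h1]
        simp [pow_succ, mul_assoc, mul_comm, mul_left_comm]
        ring
      · simp [div_div, pow_succ]
  -- p-th iterate
  have hFp : ∀ z : 𝕂 × 𝕂, F^[p] z = (z.1 + S (α * z.2), z.2) := by
    intro z
    obtain ⟨x, y⟩ := z
    rw [key p x y]
    refine Prod.ext ?_ ?_
    · show α ^ p * x + _ = x + S (α * y)
      rw [hα, one_mul]
      congr 1
      simp only [hS]
      rw [← Finset.sum_range_reflect (fun j => α ^ j * f (α ^ j * (α * y))) p]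
      refine Finset.sum_congr rfl fun j hj => ?_
      rw [Finset.mem_range] at hj
      congr 2
      rw [div_eq_iff (pow_ne_zero j hα0)]
      have e : α ^ (p - 1 - j) * (α * y) * α ^ j = α ^ ((p - 1 - j) + 1 + j) * y := by
        rw [pow_add, pow_add, pow_one]; ring
      rw [e, show (p - 1 - j) + 1 + j = p from by omega, hα, one_mul]
    · show y / α ^ p = y
      rw [hα, div_one]
  -- iterates of F^[p]
  have hFpm : ∀ m (z : 𝕂 × 𝕂), (F^[p])^[m] z = (z.1 + (m : 𝕂) * S (α * z.2), z.2) := by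
    intro m
    induction m with
    | zero => simp
    | succ m ih =>
      intro z
      rw [Function.iterate_succ_apply', ih, hFp]
      simp only
      refine Prod.ext ?_ rfl
      push_cast
      ring
  -- any period is a multiple of p
  have hdvd : ∀ q : ℕ, 0 < q → (∀ z : 𝕂 × 𝕂, F^[q] z = z) → p ∣ q := by
    intro q hq hq'
    have h2 : α ^ q = 1 := by
      have := congrArg Prod.snd (hq' (0, 1))
      rw [key q 0 1] at this
      simp only at this
      field_simp at this
      exact this.symm
    have hr : α ^ (q % p) = 1 := by
      conv at h2 => rw [← Nat.div_add_mod q p]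
      rw [pow_add, pow_mul, hα, one_pow, one_mul] at h2
      exact h2
    rcases Nat.eq_zero_or_pos (q % p) with h | h
    · exact Nat.dvd_of_mod_eq_zero h
    · exact absurd hr (hprim _ h (Nat.mod_lt _ hp))
  -- forward direction: periodicity implies the sum vanishes
  have fwd : (∃ q : ℕ, 0 < q ∧ ∀ z : 𝕂 × 𝕂, F^[q] z = z) → ∀ y : 𝕂, S y = 0 := by
    rintro ⟨q, hq, hq'⟩ y
    obtain ⟨m, rfl⟩ := hdvd q hq hq'
    have hm : 0 < m := Nat.pos_of_ne_zero (by rintro rfl; simp at hq)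
    have := hq' (0, y / α)
    rw [Function.iterate_mul, hFpm m (0, y / α)] at this
    simp only [mul_div_cancel₀ y hα0] at this
    have h0 : (m : 𝕂) * S y = 0 := by
      have := congrArg Prod.fst this
      simpa using this
    rcases mul_eq_zero.mp h0 with h | h
    · exact absurd h (by exact_mod_cast hm.ne')
    · exact h
  have hsum' : (∀ y : 𝕂, ∑ j ∈ Finset.range p, α ^ j * f (α ^ j * y) = 0) →
      ∀ y : 𝕂, S y = 0 := fun h y => h y
  refine ⟨⟨fwd, fun hsum => ⟨p, hp, fun z => ?_⟩⟩, fun hsum => ⟨fun z => ?_, fun q hq hq' => ?_⟩⟩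
  · rw [hFp, hsum' hsum (α * z.2), add_zero]
  · rw [hFp, hsum' hsum (α * z.2), add_zero]
  · exact Nat.le_of_dvd hq (hdvd q hq hq')
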